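/- For every (r, b) ∈ M̄ and every ν in the normal cone N(r,b) = { u ∈ L^2(T^N)^2 : ⟨(s,c) − (r,b), u⟩_{L^2} ≤ 0 for all (s,c) ∈ M̄ }, the inner product ⟨F(r,b), ν⟩_{L^2} ≤ 0 holds; i.e. F points into M̄ on its boundary. -/

import Mathlib

open MeasureTheory Filter Set
open scoped ENNReal Topology

noncomputable section

/-! Functions on the torus `T^N` are modelled as `ℤ^N`-periodic functions on `ℝ^N`;
convolution with a kernel `K₁ : ℝ^N → ℝ` over all of `ℝ^N` is then exactly convolution
against the periodization of `K₁` on the torus. -/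

/-- `u : ℝ^N → ℝ` represents a function on the torus `T^N`: it is `ℤ^N`-periodic. -/
def IsPeriodic {N : ℕ} (u : (Fin N → ℝ) → ℝ) : Prop :=
  ∀ (x : Fin N → ℝ) (m : Fin N → ℤ), u (x + fun i => (m i : ℝ)) = u x

/-- The set `M̄` of pairs of (torus) densities `(r, b)` with `0 ≤ r`, `0 ≤ b`,
`r + b ≤ 1` a.e. (membership in `L²(T^N)` follows from measurability and boundedness). -/
def MBar (N : ℕ) : Set (((Fin N → ℝ) → ℝ) × ((Fin N → ℝ) → ℝ)) :=
  {p | Measurable p.1 ∧ Measurable p.2 ∧ IsPeriodic p.1 ∧ IsPeriodic p.2 ∧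
    (∀ᵐ x ∂volume, 0 ≤ p.1 x) ∧ (∀ᵐ x ∂volume, 0 ≤ p.2 x) ∧
    ∀ᵐ x ∂volume, p.1 x + p.2 x ≤ 1}

/-- The diffusivity `D_r(p,q) = C_r e^{-C_rr p + C_rb q}`. -/
def Dr (C_r C_rr C_rb p q : ℝ) : ℝ := C_r * Real.exp (-C_rr * p + C_rb * q)

/-- The diffusivity `D_b(p,q) = C_b e^{C_br p - C_bb q}`. -/
def Db (C_b C_br C_bb p q : ℝ) : ℝ := C_b * Real.exp (C_br * p - C_bb * q)

/-- Convolution `(K * u)(x) = ∫_{ℝ^N} K(x - y) u(y) dy`; for `ℤ^N`-periodic `u` this is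
convolution on the torus against the periodization of `K`. -/
def conv {N : ℕ} (K u : (Fin N → ℝ) → ℝ) (x : Fin N → ℝ) : ℝ :=
  ∫ y, K (x - y) * u y

/-- First component of the vector field:
`F_r(r,b) = (1-ρ) K₁*(D_r(r,b) r) - D_r(r,b) r K₁*(1-ρ)`, `ρ = r + b`. -/
def Fr {N : ℕ} (K₁ : (Fin N → ℝ) → ℝ) (C_r C_rr C_rb : ℝ)
    (r b : (Fin N → ℝ) → ℝ) (x : Fin N → ℝ) : ℝ :=
  (1 - (r x + b x)) * conv K₁ (fun y => Dr C_r C_rr C_rb (r y) (b y) * r y) x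
    - Dr C_r C_rr C_rb (r x) (b x) * r x * conv K₁ (fun y => 1 - (r y + b y)) x

/-- Second component of the vector field:
`F_b(r,b) = (1-ρ) K₁*(D_b(r,b) b) - D_b(r,b) b K₁*(1-ρ)`, `ρ = r + b`. -/
def Fb {N : ℕ} (K₁ : (Fin N → ℝ) → ℝ) (C_b C_br C_bb : ℝ)
    (r b : (Fin N → ℝ) → ℝ) (x : Fin N → ℝ) : ℝ :=
  (1 - (r x + b x)) * conv K₁ (fun y => Db C_b C_br C_bb (r y) (b y) * b y) x
    - Db C_b C_br C_bb (r x) (b x) * b x * conv K₁ (fun y => 1 - (r y + b y)) x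

/-- An admissible kernel: `K ∈ W^{1,1}(ℝ^N)`, positive, radially symmetric with
nonincreasing profile, and at most Coulomb-singular at the origin. -/
structure IsAdmissibleKernel (N : ℕ) (K : (Fin N → ℝ) → ℝ) : Prop where
  integrable : Integrable K volume
  grad_integrable : Integrable (fun x => ‖fderiv ℝ K x‖) volume
  pos : ∀ x, 0 < K x
  radial : ∃ k : ℝ → ℝ, (∀ x, K x = k (Real.sqrt (∑ i, x i ^ 2))) ∧ AntitoneOn k (Set.Ici 0)
  coulomb : ∃ C > (0 : ℝ), ∀ x : Fin N → ℝ, x ≠ 0 → Real.sqrt (∑ i, x i ^ 2) ≤ 1 →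
    K x ≤ C * Real.sqrt (∑ i, x i ^ 2) ^ (2 - (N : ℝ))


/-- The unit cell `[0,1)^N` of the torus `T^N`, over which torus integrals are taken. -/
def unitBox (N : ℕ) : Set (Fin N → ℝ) := Set.univ.pi fun _ => Set.Ico (0 : ℝ) 1

section AuxLemmas

variable {N : ℕ}

/-- Convolution is unchanged if the kernel is modified on a null set. -/
lemma conv_congr_kernel {K K' u : (Fin N → ℝ) → ℝ} (h : K =ᵐ[volume] K') (x : Fin N → ℝ) :
    conv K u x = conv K' u x := by
  apply integral_congr_ae
  have h1 : (K ∘ fun y => x - y) =ᵐ[volume] (K' ∘ fun y => x - y) :=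
    (Measure.measurePreserving_sub_left volume x).quasiMeasurePreserving.ae_eq_comp h
  filter_upwards [h1] with y hy
  simp only [Function.comp] at hy
  simp [hy]

/-- Convolution with an integrable kernel of a measurable function is measurable. -/
lemma conv_measurable {K u : (Fin N → ℝ) → ℝ} (hK : Integrable K volume)
    (hu : Measurable u) : Measurable (conv K u) := by
  have hKm := hK.aestronglyMeasurable
  have key : conv K u = conv (hKm.mk K) u :=
    funext fun x => conv_congr_kernel hKm.ae_eq_mk x
  rw [key]
  have h2 : StronglyMeasurable
      (fun p : (Fin N → ℝ) × (Fin N → ℝ) => hKm.mk K (p.1 - p.2) * u p.2) := by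
    refine Measurable.stronglyMeasurable ?_
    exact ((hKm.stronglyMeasurable_mk.measurable.comp
      (measurable_fst.sub measurable_snd)).mul (hu.comp measurable_snd))
  exact h2.integral_prod_right'.measurable

/-- Convolution of a periodic function is periodic. -/
lemma conv_periodic {K u : (Fin N → ℝ) → ℝ} (hu : IsPeriodic u) :
    IsPeriodic (conv K u) := by
  intro x m
  show (∫ y, K ((x + fun i => (m i : ℝ)) - y) * u y) = ∫ y, K (x - y) * u y
  rw [← integral_add_right_eq_self
    (fun y => K ((x + fun i => (m i : ℝ)) - y) * u y) (fun i => (m i : ℝ))]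
  refine integral_congr_ae (Eventually.of_forall fun y => ?_)
  have h1 : (x + fun i => (m i : ℝ)) - (y + fun i => (m i : ℝ)) = x - y := by abel
  dsimp only
  rw [h1, hu y m]

/-- Convolution of an a.e. nonnegative function with a positive kernel is nonnegative. -/
lemma conv_nonneg_of_ae {K u : (Fin N → ℝ) → ℝ} (hKpos : ∀ x, 0 < K x)
    (hu : ∀ᵐ y ∂volume, 0 ≤ u y) (x : Fin N → ℝ) : 0 ≤ conv K u x := by
  refine integral_nonneg_of_ae ?_
  filter_upwards [hu] with y hy
  exact mul_nonneg (hKpos _).le hy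

/-- Convolution of a function bounded above by `M` (a.e.) with a positive integrable
kernel is bounded by `M * ∫ K`. -/
lemma conv_le_of_ae {K u : (Fin N → ℝ) → ℝ} {M : ℝ} (hK : Integrable K volume)
    (hKpos : ∀ x, 0 < K x) (hu0 : ∀ᵐ y ∂volume, 0 ≤ u y)
    (huM : ∀ᵐ y ∂volume, u y ≤ M) (x : Fin N → ℝ) :
    conv K u x ≤ M * ∫ z, K z := by
  have hint : Integrable (fun y => M * K (x - y)) volume :=
    (hK.comp_sub_left x).const_mul M
  have h1 : conv K u x ≤ ∫ y, M * K (x - y) := by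
    refine integral_mono_of_nonneg ?_ hint ?_
    · filter_upwards [hu0] with y hy
      exact mul_nonneg (hKpos _).le hy
    · filter_upwards [huM] with y hy
      calc K (x - y) * u y ≤ K (x - y) * M :=
            mul_le_mul_of_nonneg_left hy (hKpos _).le
        _ = M * K (x - y) := by ring
  calc conv K u x ≤ ∫ y, M * K (x - y) := h1
    _ = M * ∫ y, K (x - y) := integral_const_mul M _
    _ = M * ∫ z, K z := by rw [integral_sub_left_eq_self K volume x]


/-- Arithmetic helper: nonnegativity of the perturbed density. -/
lemma aux_nonneg {rx ρ1 P d R eps M A : ℝ} (hrx : 0 ≤ rx) (hρ1 : 0 ≤ ρ1) (hP : 0 ≤ P)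
    (hd : 0 ≤ d) (hdM : d ≤ M) (hR0 : 0 ≤ R) (hRA : R ≤ A)
    (hM : 0 ≤ M) (heps : 0 ≤ eps) (hepsMA : eps * (M * A) ≤ 1) :
    0 ≤ rx + eps * (ρ1 * P - d * rx * R) := by
  have key : d * rx * R ≤ M * A * rx := by
    nlinarith [mul_nonneg hrx hR0, mul_nonneg (sub_nonneg.2 hdM) (mul_nonneg hrx hR0),
      mul_nonneg (mul_nonneg hM hrx) (sub_nonneg.2 hRA)]
  have key2 : eps * (d * rx * R) ≤ rx := by
    calc eps * (d * rx * R) ≤ eps * (M * A * rx) := mul_le_mul_of_nonneg_left key heps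
      _ = (eps * (M * A)) * rx := by ring
      _ ≤ 1 * rx := mul_le_mul_of_nonneg_right hepsMA hrx
      _ = rx := one_mul _
  have hfirst : 0 ≤ eps * (ρ1 * P) := mul_nonneg heps (mul_nonneg hρ1 hP)
  nlinarith [hfirst, key2]

/-- Arithmetic helper: sum of the perturbed densities stays at most `1`. -/
lemma aux_sum {rx bx P Q dr db R eps Mr Mb A : ℝ} (hrx : 0 ≤ rx) (hbx : 0 ≤ bx)
    (hsum : rx + bx ≤ 1) (hP0 : 0 ≤ P) (hPM : P ≤ Mr * A) (hQ0 : 0 ≤ Q) (hQM : Q ≤ Mb * A)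
    (hdr : 0 ≤ dr) (hdb : 0 ≤ db) (hR0 : 0 ≤ R) (heps : 0 ≤ eps)
    (hepsS : eps * (Mr * A + Mb * A) ≤ 1) :
    (rx + eps * ((1 - (rx + bx)) * P - dr * rx * R)) +
      (bx + eps * ((1 - (rx + bx)) * Q - db * bx * R)) ≤ 1 := by
  have hρ : 0 ≤ 1 - (rx + bx) := by linarith
  have keysum : (1 - (rx + bx)) * P + (1 - (rx + bx)) * Q
      ≤ (Mr * A + Mb * A) * (1 - (rx + bx)) := by
    nlinarith [mul_le_mul_of_nonneg_left hPM hρ, mul_le_mul_of_nonneg_left hQM hρ]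
  have key2 : eps * ((Mr * A + Mb * A) * (1 - (rx + bx))) ≤ 1 - (rx + bx) := by
    calc eps * ((Mr * A + Mb * A) * (1 - (rx + bx)))
        = (eps * (Mr * A + Mb * A)) * (1 - (rx + bx)) := by ring
      _ ≤ 1 * (1 - (rx + bx)) := mul_le_mul_of_nonneg_right hepsS hρ
      _ = 1 - (rx + bx) := one_mul _
  have hd1 : 0 ≤ dr * rx * R := mul_nonneg (mul_nonneg hdr hrx) hR0
  have hd2 : 0 ≤ db * bx * R := mul_nonneg (mul_nonneg hdb hbx) hR0
  nlinarith [mul_le_mul_of_nonneg_left keysum heps, key2,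
    mul_nonneg heps hd1, mul_nonneg heps hd2]

end AuxLemmas

set_option maxHeartbeats 1000000

/-- **The vector field points into `M̄` on its boundary.** For every `(r, b) ∈ M̄` and every
`ν = (ν₁, ν₂)` in the normal cone
`N(r,b) = {u ∈ L²(T^N)² : ⟨(s,c) - (r,b), u⟩_{L²} ≤ 0 for all (s,c) ∈ M̄}`,
one has `⟨F(r,b), ν⟩_{L²} ≤ 0`. -/
theorem F_points_into_MBar (N : ℕ) (K₁ : (Fin N → ℝ) → ℝ)
    (C_r C_rr C_rb C_b C_br C_bb : ℝ)
    (hCr : 0 < C_r) (hCrr : 0 < C_rr) (hCrb : 0 < C_rb)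
    (hCb : 0 < C_b) (hCbr : 0 < C_br) (hCbb : 0 < C_bb)
    (hK : IsAdmissibleKernel N K₁)
    (r b : (Fin N → ℝ) → ℝ) (hrb : (r, b) ∈ MBar N)
    (ν₁ ν₂ : (Fin N → ℝ) → ℝ)
    (hν₁m : Measurable ν₁) (hν₂m : Measurable ν₂)
    (hν₁p : IsPeriodic ν₁) (hν₂p : IsPeriodic ν₂)
    (hν₁L2 : MemLp ν₁ 2 (volume.restrict (unitBox N)))
    (hν₂L2 : MemLp ν₂ 2 (volume.restrict (unitBox N)))
    (hcone : ∀ s c : (Fin N → ℝ) → ℝ, (s, c) ∈ MBar N →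
      (∫ x in unitBox N, ((s x - r x) * ν₁ x + (c x - b x) * ν₂ x)) ≤ 0) :
    (∫ x in unitBox N,
        (Fr K₁ C_r C_rr C_rb r b x * ν₁ x + Fb K₁ C_b C_br C_bb r b x * ν₂ x)) ≤ 0 := by
  obtain ⟨hrm, hbm, hrp, hbp, hr0, hb0, hrb1⟩ := hrb
  simp only at hrm hbm hrp hbp hr0 hb0 hrb1
  -- basic constants
  set Mr : ℝ := C_r * Real.exp C_rb with hMr_def
  set Mb : ℝ := C_b * Real.exp C_br with hMb_def
  set A : ℝ := ∫ z, K₁ z with hA_def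
  have hA0 : 0 ≤ A := integral_nonneg fun z => (hK.pos z).le
  have hMr0 : 0 < Mr := mul_pos hCr (Real.exp_pos _)
  have hMb0 : 0 < Mb := mul_pos hCb (Real.exp_pos _)
  set Dd : ℝ := Mr * A + Mb * A + 1 with hDd_def
  have hDd1 : 1 ≤ Dd := by nlinarith [mul_nonneg hMr0.le hA0, mul_nonneg hMb0.le hA0]
  have hDdpos : 0 < Dd := lt_of_lt_of_le one_pos hDd1
  set ε : ℝ := 1 / Dd with hε_def
  have hε : 0 < ε := by positivity
  have hεMr : ε * (Mr * A) ≤ 1 := by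
    rw [hε_def, div_mul_eq_mul_div, one_mul, div_le_one hDdpos]
    nlinarith [mul_nonneg hMb0.le hA0]
  have hεMb : ε * (Mb * A) ≤ 1 := by
    rw [hε_def, div_mul_eq_mul_div, one_mul, div_le_one hDdpos]
    nlinarith [mul_nonneg hMr0.le hA0]
  have hεsum : ε * (Mr * A + Mb * A) ≤ 1 := by
    rw [hε_def, div_mul_eq_mul_div, one_mul, div_le_one hDdpos]
    linarith
  -- a.e. pointwise bounds on r, b
  have hr1 : ∀ᵐ y ∂(volume : Measure (Fin N → ℝ)), r y ≤ 1 := by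
    filter_upwards [hb0, hrb1] with y h1 h2; linarith
  have hb1 : ∀ᵐ y ∂(volume : Measure (Fin N → ℝ)), b y ≤ 1 := by
    filter_upwards [hr0, hrb1] with y h1 h2; linarith
  -- a.e. bounds on the convolved densities
  have hDrpos : ∀ p q : ℝ, 0 < Dr C_r C_rr C_rb p q :=
    fun p q => mul_pos hCr (Real.exp_pos _)
  have hDbpos : ∀ p q : ℝ, 0 < Db C_b C_br C_bb p q :=
    fun p q => mul_pos hCb (Real.exp_pos _)
  have hDrle : ∀ᵐ y ∂(volume : Measure (Fin N → ℝ)), Dr C_r C_rr C_rb (r y) (b y) ≤ Mr := by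
    filter_upwards [hr0, hb1] with y h1 h2
    rw [Dr, hMr_def]
    refine mul_le_mul_of_nonneg_left (Real.exp_le_exp.2 ?_) hCr.le
    nlinarith
  have hDble : ∀ᵐ y ∂(volume : Measure (Fin N → ℝ)), Db C_b C_br C_bb (r y) (b y) ≤ Mb := by
    filter_upwards [hb0, hr1] with y h1 h2
    rw [Db, hMb_def]
    refine mul_le_mul_of_nonneg_left (Real.exp_le_exp.2 ?_) hCb.le
    nlinarith
  have hu₁0 : ∀ᵐ y ∂(volume : Measure (Fin N → ℝ)),
      0 ≤ Dr C_r C_rr C_rb (r y) (b y) * r y := by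
    filter_upwards [hr0] with y h1; exact mul_nonneg (hDrpos _ _).le h1
  have hu₁M : ∀ᵐ y ∂(volume : Measure (Fin N → ℝ)),
      Dr C_r C_rr C_rb (r y) (b y) * r y ≤ Mr := by
    filter_upwards [hr0, hr1, hDrle] with y h1 h2 h3
    calc Dr C_r C_rr C_rb (r y) (b y) * r y ≤ Mr * r y :=
          mul_le_mul_of_nonneg_right h3 h1
      _ ≤ Mr * 1 := mul_le_mul_of_nonneg_left h2 hMr0.le
      _ = Mr := mul_one _
  have hu₂0 : ∀ᵐ y ∂(volume : Measure (Fin N → ℝ)),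
      0 ≤ Db C_b C_br C_bb (r y) (b y) * b y := by
    filter_upwards [hb0] with y h1; exact mul_nonneg (hDbpos _ _).le h1
  have hu₂M : ∀ᵐ y ∂(volume : Measure (Fin N → ℝ)),
      Db C_b C_br C_bb (r y) (b y) * b y ≤ Mb := by
    filter_upwards [hb0, hb1, hDble] with y h1 h2 h3
    calc Db C_b C_br C_bb (r y) (b y) * b y ≤ Mb * b y :=
          mul_le_mul_of_nonneg_right h3 h1
      _ ≤ Mb * 1 := mul_le_mul_of_nonneg_left h2 hMb0.le
      _ = Mb := mul_one _
  have hu₃0 : ∀ᵐ y ∂(volume : Measure (Fin N → ℝ)), 0 ≤ 1 - (r y + b y) := by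
    filter_upwards [hrb1] with y h1; linarith
  have hu₃1 : ∀ᵐ y ∂(volume : Measure (Fin N → ℝ)), 1 - (r y + b y) ≤ 1 := by
    filter_upwards [hr0, hb0] with y h1 h2; linarith
  -- the three convolutions, with everywhere bounds
  have hP0 : ∀ x, 0 ≤ conv K₁ (fun y => Dr C_r C_rr C_rb (r y) (b y) * r y) x :=
    conv_nonneg_of_ae hK.pos hu₁0
  have hPM : ∀ x, conv K₁ (fun y => Dr C_r C_rr C_rb (r y) (b y) * r y) x ≤ Mr * A :=
    conv_le_of_ae hK.integrable hK.pos hu₁0 hu₁M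
  have hQ0 : ∀ x, 0 ≤ conv K₁ (fun y => Db C_b C_br C_bb (r y) (b y) * b y) x :=
    conv_nonneg_of_ae hK.pos hu₂0
  have hQM : ∀ x, conv K₁ (fun y => Db C_b C_br C_bb (r y) (b y) * b y) x ≤ Mb * A :=
    conv_le_of_ae hK.integrable hK.pos hu₂0 hu₂M
  have hR0 : ∀ x, 0 ≤ conv K₁ (fun y => 1 - (r y + b y)) x :=
    conv_nonneg_of_ae hK.pos hu₃0
  have hRA : ∀ x, conv K₁ (fun y => 1 - (r y + b y)) x ≤ A := by
    intro x
    have := conv_le_of_ae (M := 1) hK.integrable hK.pos hu₃0 hu₃1 x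
    simpa using this
  -- measurability of the vector field
  have hDrm : Measurable (fun x => Dr C_r C_rr C_rb (r x) (b x)) := by
    unfold Dr
    exact measurable_const.mul (((hrm.const_mul (-C_rr)).add (hbm.const_mul C_rb)).exp)
  have hDbm : Measurable (fun x => Db C_b C_br C_bb (r x) (b x)) := by
    unfold Db
    exact measurable_const.mul (((hrm.const_mul C_br).sub (hbm.const_mul C_bb)).exp)
  have hu₁m : Measurable (fun y => Dr C_r C_rr C_rb (r y) (b y) * r y) := hDrm.mul hrm
  have hu₂m : Measurable (fun y => Db C_b C_br C_bb (r y) (b y) * b y) := hDbm.mul hbm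
  have hu₃m : Measurable (fun y => 1 - (r y + b y)) := measurable_const.sub (hrm.add hbm)
  have hconv₁m := conv_measurable hK.integrable hu₁m
  have hconv₂m := conv_measurable hK.integrable hu₂m
  have hconv₃m := conv_measurable hK.integrable hu₃m
  have hFrm : Measurable (fun x => Fr K₁ C_r C_rr C_rb r b x) := by
    unfold Fr
    exact ((measurable_const.sub (hrm.add hbm)).mul hconv₁m).sub
      ((hDrm.mul hrm).mul hconv₃m)
  have hFbm : Measurable (fun x => Fb K₁ C_b C_br C_bb r b x) := by
    unfold Fb
    exact ((measurable_const.sub (hrm.add hbm)).mul hconv₂m).sub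
      ((hDbm.mul hbm).mul hconv₃m)
  -- periodicity of the vector field
  have hu₁p : IsPeriodic (fun y => Dr C_r C_rr C_rb (r y) (b y) * r y) := by
    intro x m; dsimp only; rw [hrp x m, hbp x m]
  have hu₂p : IsPeriodic (fun y => Db C_b C_br C_bb (r y) (b y) * b y) := by
    intro x m; dsimp only; rw [hrp x m, hbp x m]
  have hu₃p : IsPeriodic (fun y => 1 - (r y + b y)) := by
    intro x m; dsimp only; rw [hrp x m, hbp x m]
  have hconv₁p := conv_periodic (K := K₁) hu₁p
  have hconv₂p := conv_periodic (K := K₁) hu₂p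
  have hconv₃p := conv_periodic (K := K₁) hu₃p
  have hFrp : ∀ (x : Fin N → ℝ) (m : Fin N → ℤ),
      Fr K₁ C_r C_rr C_rb r b (x + fun i => (m i : ℝ)) = Fr K₁ C_r C_rr C_rb r b x := by
    intro x m
    unfold Fr
    rw [hrp x m, hbp x m, hconv₁p x m, hconv₃p x m]
  have hFbp : ∀ (x : Fin N → ℝ) (m : Fin N → ℤ),
      Fb K₁ C_b C_br C_bb r b (x + fun i => (m i : ℝ)) = Fb K₁ C_b C_br C_bb r b x := by
    intro x m
    unfold Fb
    rw [hrp x m, hbp x m, hconv₂p x m, hconv₃p x m]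
  -- the perturbed pair lies in MBar
  have hmem : ((fun x => r x + ε * Fr K₁ C_r C_rr C_rb r b x),
      (fun x => b x + ε * Fb K₁ C_b C_br C_bb r b x)) ∈ MBar N := by
    refine ⟨hrm.add (hFrm.const_mul ε), hbm.add (hFbm.const_mul ε), ?_, ?_, ?_, ?_, ?_⟩
    · intro x m; dsimp only; rw [hrp x m, hFrp x m]
    · intro x m; dsimp only; rw [hbp x m, hFbp x m]
    · -- 0 ≤ r + ε Fr a.e.
      filter_upwards [hr0, hb0, hrb1, hDrle] with x h1 h2 h3 h4
      unfold Fr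
      exact aux_nonneg h1 (by linarith) (hP0 x) (hDrpos _ _).le h4 (hR0 x) (hRA x)
        hMr0.le hε.le hεMr
    · -- 0 ≤ b + ε Fb a.e.
      filter_upwards [hr0, hb0, hrb1, hDble] with x h1 h2 h3 h4
      unfold Fb
      exact aux_nonneg h2 (by linarith) (hQ0 x) (hDbpos _ _).le h4 (hR0 x) (hRA x)
        hMb0.le hε.le hεMb
    · -- sum ≤ 1 a.e.
      filter_upwards [hr0, hb0, hrb1] with x h1 h2 h3
      unfold Fr Fb
      exact aux_sum h1 h2 h3 (hP0 x) (hPM x) (hQ0 x) (hQM x) (hDrpos _ _).le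
        (hDbpos _ _).le (hR0 x) hε.le hεsum
  -- apply the cone inequality to the perturbed pair
  have hc := hcone _ _ hmem
  have heq : (∫ x in unitBox N,
      (((fun x => r x + ε * Fr K₁ C_r C_rr C_rb r b x) x - r x) * ν₁ x +
       ((fun x => b x + ε * Fb K₁ C_b C_br C_bb r b x) x - b x) * ν₂ x))
      = ∫ x in unitBox N,
        ε * (Fr K₁ C_r C_rr C_rb r b x * ν₁ x + Fb K₁ C_b C_br C_bb r b x * ν₂ x) := by
    refine integral_congr_ae (Eventually.of_forall fun x => ?_)
    dsimp only
    ring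
  rw [heq, integral_const_mul] at hc
  by_contra hcon
  push_neg at hcon
  nlinarith [mul_pos hε hcon]

end
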